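/- Suppose κ is a nonnegative finite Borel measure on [0,∞) with ∫₀^∞ s dκ(s) = +∞, and suppose K ∈ L²(0,∞) with β²∫₀^∞ K(s)² ds < 1 where β ≠ 0, σ ≠ 0. Then the function γ : [0,∞) → ℝ defined by γ(Δ) = β² · (σ²/(1 − β²∫₀^∞ K(s)² ds)) · ∫₀^∞ K(s)K(s+Δ) ds satisfies ∫₀^∞ |γ(Δ)| dΔ = +∞. -/

import Mathlib

open MeasureTheory Filter Set
open Topology

lemma aux_indicator_sup (τ : ℝ) (f : ℝ → ENNReal) (t : ℝ) :
    (Ioi τ).indicator f t = ⨆ N : ℕ, (Ioc τ (τ + N)).indicator f t := by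
  by_cases ht : τ < t
  · rw [indicator_of_mem (mem_Ioi.mpr ht)]
    refine le_antisymm ?_ (iSup_le fun N => ?_)
    · obtain ⟨N, hN⟩ := exists_nat_ge (t - τ)
      exact le_iSup_of_le N (le_of_eq (indicator_of_mem (show t ∈ Ioc τ (τ+(N:ℝ)) from ⟨ht, by linarith⟩) f).symm)
    · by_cases h : t ∈ Ioc τ (τ + N)
      · rw [indicator_of_mem h]
      · rw [indicator_of_notMem h]; exact zero_le
  · rw [indicator_of_notMem (fun (h : t ∈ Ioi τ) => ht h)]
    have : ∀ N : ℕ, (Ioc τ (τ + (N:ℝ))).indicator f t = 0 := fun N =>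
      indicator_of_notMem (fun (h : t ∈ Ioc τ (τ+(N:ℝ))) => ht h.1) f
    simp [this]

lemma aux_exists_big {F : ℝ → ℝ} (hmeas : Measurable F) (hnn : ∀ x, 0 ≤ F x)
    (hint : ∀ a b : ℝ, IntegrableOn F (Ioc a b))
    {τ : ℝ} (htop : ∫⁻ t in Ioi τ, ENNReal.ofReal (F t) = ⊤) (x r0 : ℝ) :
    ∃ R : ℝ, r0 ≤ R ∧ x ≤ ∫ t in Ioc τ R, F t := by
  by_contra hcon
  push_neg at hcon
  have hall : ∀ R : ℝ, ∫ t in Ioc τ R, F t ≤ x := by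
    intro R
    refine le_trans (setIntegral_mono_set (hint τ (max R r0)) (ae_of_all _ fun t => hnn t)
      (HasSubset.Subset.eventuallyLE (Ioc_subset_Ioc_right (le_max_left _ _)))) ?_
    exact (hcon (max R r0) (le_max_right _ _)).le
  have key : ∫⁻ t in Ioi τ, ENNReal.ofReal (F t) =
      ⨆ N : ℕ, ∫⁻ t in Ioc τ (τ + N), ENNReal.ofReal (F t) := by
    have hmeas' : Measurable fun t => ENNReal.ofReal (F t) := hmeas.ennreal_ofReal
    rw [← lintegral_indicator measurableSet_Ioi]
    have h2 : ∀ N : ℕ, ∫⁻ t in Ioc τ (τ + (N:ℝ)), ENNReal.ofReal (F t) =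
        ∫⁻ t, (Ioc τ (τ + (N:ℝ))).indicator (fun t => ENNReal.ofReal (F t)) t := fun N =>
      (lintegral_indicator measurableSet_Ioc _).symm
    simp_rw [h2]
    rw [← lintegral_iSup (fun N => hmeas'.indicator measurableSet_Ioc)
      (fun i j hij => indicator_le_indicator_of_subset
        (Ioc_subset_Ioc_right (by exact_mod_cast add_le_add_right (Nat.cast_le.2 hij) τ))
        (fun a => zero_le))]
    congr 1
    funext t
    exact aux_indicator_sup τ _ t
  have hle : ∀ N : ℕ, ∫⁻ t in Ioc τ (τ + (N:ℝ)), ENNReal.ofReal (F t) ≤ ENNReal.ofReal x := by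
    intro N
    rw [← ofReal_integral_eq_lintegral_ofReal (hint τ (τ + N)) (ae_of_all _ fun t => hnn t)]
    exact ENNReal.ofReal_le_ofReal (hall _)
  rw [htop] at key
  exact (ENNReal.ofReal_ne_top : ENNReal.ofReal x ≠ ⊤) (top_le_iff.1 ((key.le.trans (iSup_le hle))))

/-- Theorem 5.3(b) (long memory): if `κ` is a nonnegative finite measure with infinite first
moment, `K ∈ L²(0,∞)` and `β² ∫₀^∞ K² < 1`, then the limiting autocovariance function
`γ(Δ) = β² (σ²/(1−β²∫₀^∞K²)) ∫₀^∞ K(s)K(s+Δ) ds` satisfies `∫₀^∞ |γ(Δ)| dΔ = +∞`.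
Here `K(x) = −λ([−τ, −(x∧τ)]) + κ([x,∞))`. -/
theorem blackScholesLongMemory_long_memory
    (σ β τ : ℝ) (hσ : σ ≠ 0) (hβ : β ≠ 0) (hτ : 0 < τ)
    (lam : SignedMeasure ℝ) (kap : Measure ℝ) [IsFiniteMeasure kap]
    (hlam_supp : lam.totalVariation (Icc (-τ) 0)ᶜ = 0)
    (hkap_supp : kap (Ici 0)ᶜ = 0)
    (hbal : (kap (Ici 0)).toReal = lam (Icc (-τ) 0))
    (K : ℝ → ℝ)
    (hK : ∀ x ≥ (0:ℝ), K x = -(lam (Icc (-τ) (-(min x τ)))) + (kap (Ici x)).toReal)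
    (hmom : ∫⁻ s in Ici (0:ℝ), ENNReal.ofReal s ∂kap = ⊤)
    (hKL2 : IntegrableOn (fun s => K s ^ 2) (Ioi 0))
    (hsmall : β ^ 2 * ∫ s in Ioi (0:ℝ), K s ^ 2 < 1) :
    ∫⁻ Δ in Ioi (0:ℝ),
      ENNReal.ofReal |β ^ 2 * (σ ^ 2 / (1 - β ^ 2 * ∫ s in Ioi (0:ℝ), K s ^ 2)) *
        ∫ s in Ioi (0:ℝ), K s * K (s + Δ)| = ⊤ := by
  classical
  -- the positive constant
  set C : ℝ := β ^ 2 * (σ ^ 2 / (1 - β ^ 2 * ∫ s in Ioi (0:ℝ), K s ^ 2)) with hC_def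
  have hβ2 : 0 < β ^ 2 := lt_of_le_of_ne (sq_nonneg β) (Ne.symm (pow_ne_zero 2 hβ))
  have hσ2 : 0 < σ ^ 2 := lt_of_le_of_ne (sq_nonneg σ) (Ne.symm (pow_ne_zero 2 hσ))
  have hC : 0 < C := mul_pos hβ2 (div_pos hσ2 (by linarith))
  -- Jordan decomposition of lam
  have lam_apply : ∀ A : Set ℝ, MeasurableSet A → lam A =
      (lam.toJordanDecomposition.posPart A).toReal -
      (lam.toJordanDecomposition.negPart A).toReal := by
    intro A hA
    conv_lhs => rw [← lam.toSignedMeasure_toJordanDecomposition]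
    rw [MeasureTheory.JordanDecomposition.toSignedMeasure]
    exact Measure.toSignedMeasure_sub_apply hA
  -- the tail function F
  set F : ℝ → ℝ := fun t => (kap (Ici t)).toReal with hF_def
  have hFanti : Antitone F := fun a b hab =>
    ENNReal.toReal_mono (measure_ne_top _ _) (measure_mono (Ici_subset_Ici.2 hab))
  have hFnn : ∀ t, 0 ≤ F t := fun t => ENNReal.toReal_nonneg
  have hFmeas : Measurable F := hFanti.measurable
  have hFbdd : ∀ t, |F t| ≤ (kap univ).toReal := fun t => by
    rw [abs_of_nonneg (hFnn t)]
    exact ENNReal.toReal_mono (measure_ne_top _ _) (measure_mono (subset_univ _))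
  -- generic integrability of bounded measurable functions on Ioc
  have hbddint : ∀ (G : ℝ → ℝ), Measurable G → (∀ t, |G t| ≤ (kap univ).toReal) →
      ∀ a b : ℝ, IntegrableOn G (Ioc a b) := by
    intro G hGm hGb a b
    refine Integrable.mono' (g := fun _ => (kap univ).toReal)
      (integrableOn_const measure_Ioc_lt_top.ne)
      hGm.aestronglyMeasurable (ae_of_all _ fun t => ?_)
    rw [Real.norm_eq_abs]; exact hGb t
  have hFint : ∀ a b : ℝ, IntegrableOn F (Ioc a b) := hbddint F hFmeas hFbdd
  -- measurable version of K on positive reals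
  set g : ℝ → ℝ := fun x =>
    -((lam.toJordanDecomposition.posPart (Icc (-τ) (-(min x τ)))).toReal -
      (lam.toJordanDecomposition.negPart (Icc (-τ) (-(min x τ)))).toReal) + F x with hg_def
  have hganti : ∀ (μ : Measure ℝ) [IsFiniteMeasure μ],
      Antitone fun x : ℝ => (μ (Icc (-τ) (-(min x τ)))).toReal := by
    intro μ _ a b hab
    refine ENNReal.toReal_mono (measure_ne_top _ _) (measure_mono (Icc_subset_Icc_right ?_))
    exact neg_le_neg (min_le_min_right τ hab)
  have hgmeas : Measurable g := by
    refine Measurable.add ?_ hFmeas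
    refine Measurable.neg (Measurable.sub ?_ ?_)
    · exact (hganti lam.toJordanDecomposition.posPart).measurable
    · exact (hganti lam.toJordanDecomposition.negPart).measurable
  have hKg : ∀ x ∈ Ioi (0:ℝ), K x = g x := by
    intro x hx
    rw [hK x (le_of_lt hx), lam_apply _ measurableSet_Icc]
  -- for x ≥ τ the kernel has the form -a + F x
  set a : ℝ := lam (Icc (-τ) (-τ)) with ha_def
  have hKτ' : ∀ x, τ ≤ x → K x = -a + F x := by
    intro x hx
    rw [hK x (le_trans hτ.le hx), ha_def]
    rw [min_eq_right hx]
  -- a = 0 because K ∈ L²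
  have ha : a = 0 := by
    by_contra ha0
    have hpos : (0:ENNReal) < ENNReal.ofReal (|a|/2) := by
      rw [ENNReal.ofReal_pos]
      positivity
    have htend : Tendsto (fun m : ℕ => kap (Ici (m:ℝ))) atTop (𝓝 (kap (⋂ m : ℕ, Ici (m:ℝ)))) :=
      tendsto_measure_iInter_atTop (fun m => measurableSet_Ici.nullMeasurableSet)
        (fun i j hij => Ici_subset_Ici.2 (Nat.cast_le.2 hij)) ⟨0, measure_ne_top _ _⟩
    have hempty : (⋂ m : ℕ, Ici ((m:ℝ))) = ∅ := by
      apply eq_empty_iff_forall_notMem.2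
      intro x hx
      obtain ⟨m, hm⟩ := exists_nat_gt x
      exact absurd (mem_iInter.1 hx m) (not_le.2 hm)
    rw [hempty, measure_empty] at htend
    obtain ⟨m, hm⟩ := (htend.eventually (gt_mem_nhds hpos)).exists
    set N : ℝ := max τ (m:ℝ) with hN_def
    have hbound : ∀ x, x ∈ Ioi N → |a|/2 ≤ |K x| := by
      intro x hx
      have hxτ : τ ≤ x := le_trans (le_max_left _ _) (le_of_lt hx)
      have hxm : (m:ℝ) ≤ x := le_trans (le_max_right _ _) (le_of_lt hx)
      have hFx : F x < |a|/2 := by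
        have h1 : kap (Ici x) ≤ kap (Ici (m:ℝ)) := measure_mono (Ici_subset_Ici.2 hxm)
        have h2 : kap (Ici x) < ENNReal.ofReal (|a|/2) := lt_of_le_of_lt h1 hm
        rw [hF_def]
        exact (ENNReal.lt_ofReal_iff_toReal_lt (measure_ne_top _ _)).1 h2
      rw [hKτ' x hxτ]
      have := abs_sub_abs_le_abs_sub (-a) (-(F x))
      rw [abs_neg, abs_neg, abs_of_nonneg (hFnn x)] at this
      have h3 : |-a + F x| = |-a - -(F x)| := by ring_nf
      rw [h3]
      linarith
    have hconst : IntegrableOn (fun _ : ℝ => a^2/4) (Ioi N) := by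
      have hsub : Ioi N ⊆ Ioi (0:ℝ) := Ioi_subset_Ioi (le_trans hτ.le (le_max_left _ _))
      refine Integrable.mono' (hKL2.mono_set hsub) aestronglyMeasurable_const
        ((ae_restrict_iff' measurableSet_Ioi).2 (ae_of_all _ fun x hx => ?_))
      have h1 : |a|/2 ≤ |K x| := hbound x hx
      rw [Real.norm_eq_abs, abs_of_nonneg (by positivity : (0:ℝ) ≤ a^2/4)]
      nlinarith [mul_self_le_mul_self (by positivity : (0:ℝ) ≤ |a|/2) h1,
        sq_abs (K x), sq_abs a]
    rw [integrableOn_const_iff] at hconst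
    rcases hconst with h | h
    · exact ha0 (by rw [enorm_eq_zero] at h; nlinarith [sq_abs a])
    · rw [Real.volume_Ioi] at h
      exact absurd h (lt_irrefl _)
  have hKF : ∀ x, τ ≤ x → K x = F x := by
    intro x hx
    rw [hKτ' x hx, ha, neg_zero, zero_add]
  -- layer cake: F is not integrable at infinity
  have hlayer : ∫⁻ t in Ioi τ, ENNReal.ofReal (F t) = ⊤ := by
    have hnn0 : (0:ℝ→ℝ) ≤ᵐ[kap.restrict (Ici 0)] id :=
      (ae_restrict_iff' measurableSet_Ici).2 (ae_of_all _ fun x hx => hx)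
    have h1 := lintegral_eq_lintegral_meas_lt (kap.restrict (Ici 0)) hnn0 aemeasurable_id
    have h2 : ∫⁻ ω, ENNReal.ofReal (id ω) ∂(kap.restrict (Ici 0)) = ⊤ := hmom
    rw [h2] at h1
    have h3 : ∫⁻ t in Ioi (0:ℝ), kap (Ici t) = ⊤ := by
      rw [eq_top_iff, h1]
      refine setLIntegral_mono' measurableSet_Ioi (fun t ht => ?_)
      show kap.restrict (Ici 0) (Ioi t) ≤ kap (Ici t)
      rw [Measure.restrict_apply measurableSet_Ioi]
      exact measure_mono (inter_subset_left.trans Ioi_subset_Ici_self)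
    have h4 : ∫⁻ t in Ioi (0:ℝ), ENNReal.ofReal (F t) = ⊤ := by
      rw [eq_top_iff, ← h3]
      refine le_of_eq (setLIntegral_congr_fun measurableSet_Ioi (fun t ht => ?_))
      rw [hF_def]
      exact (ENNReal.ofReal_toReal (measure_ne_top _ _)).symm
    have hsplit : Ioc (0:ℝ) τ ∪ Ioi τ = Ioi 0 := Ioc_union_Ioi_eq_Ioi hτ.le
    have hdisj : Disjoint (Ioc (0:ℝ) τ) (Ioi τ) := by
      rw [disjoint_left]
      intro x hx1 hx2
      exact absurd hx1.2 (not_le.2 hx2)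
    rw [← hsplit, lintegral_union measurableSet_Ioi hdisj] at h4
    have hfin : ∫⁻ t in Ioc (0:ℝ) τ, ENNReal.ofReal (F t) ≠ ⊤ := by
      refine ne_top_of_le_ne_top ?_ (setLIntegral_mono' measurableSet_Ioc
        (fun t _ => (?_ : ENNReal.ofReal (F t) ≤ kap univ)))
      · rw [setLIntegral_const]
        exact (ENNReal.mul_lt_top (measure_lt_top _ _) measure_Ioc_lt_top).ne
      · rw [hF_def, ENNReal.ofReal_toReal (measure_ne_top _ _)]
        exact measure_mono (subset_univ _)
    rcases ENNReal.add_eq_top.1 h4 with h | h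
    · exact absurd h hfin
    · exact h
  -- measurability and integrability of K
  have hKaesm : AEStronglyMeasurable K (volume.restrict (Ioi 0)) := by
    refine hgmeas.aestronglyMeasurable.congr ?_
    exact (ae_restrict_iff' measurableSet_Ioi).2 (ae_of_all _ fun x hx => (hKg x hx).symm)
  have hKmem : MemLp K 2 (volume.restrict (Ioi 0)) := (memLp_two_iff_integrable_sq hKaesm).2 hKL2
  haveI hfin1 : IsFiniteMeasure (volume.restrict (Ioc (0:ℝ) τ)) :=
    ⟨by rw [Measure.restrict_apply_univ]; exact measure_Ioc_lt_top⟩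
  have hK1 : IntegrableOn K (Ioc 0 τ) := by
    have h : MemLp K 2 (volume.restrict (Ioc (0:ℝ) τ)) :=
      hKmem.mono_measure (Measure.restrict_mono Ioc_subset_Ioi_self le_rfl)
    exact h.integrable (by norm_num)
  set M : ℝ := ∫ s in Ioc (0:ℝ) τ, |K s| with hM_def
  have hM0 : 0 ≤ M := integral_nonneg fun s => abs_nonneg _
  -- shifted kernel facts
  have hshift2 : ∀ Δ : ℝ, 0 ≤ Δ → IntegrableOn (fun s => K (s+Δ)^2) (Ioi 0) := by
    intro Δ hΔ
    have A : MeasurableEmbedding (fun x : ℝ => x + Δ) :=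
      (Homeomorph.addRight Δ).isClosedEmbedding.measurableEmbedding
    have h1 : IntegrableOn (fun s => K s ^2) (Ioi Δ) := hKL2.mono_set (Ioi_subset_Ioi hΔ)
    rw [show (volume : Measure ℝ) = Measure.map (fun x => x + Δ) volume from
      (map_add_right_eq_self volume Δ).symm] at h1
    have h2 := A.integrableOn_map_iff.1 h1
    simpa [Function.comp_def, preimage_add_const_Ioi] using h2
  have hshiftaesm : ∀ Δ : ℝ, 0 ≤ Δ → AEStronglyMeasurable (fun s => K (s+Δ))
      (volume.restrict (Ioi 0)) := by
    intro Δ hΔ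
    refine (hgmeas.comp (measurable_add_const Δ)).aestronglyMeasurable.congr ?_
    refine (ae_restrict_iff' measurableSet_Ioi).2 (ae_of_all _ fun x hx => ?_)
    refine (hKg (x+Δ) ?_).symm
    simp only [mem_Ioi] at hx ⊢
    linarith
  have hprod : ∀ Δ : ℝ, 0 ≤ Δ → IntegrableOn (fun s => K s * K (s+Δ)) (Ioi 0) := by
    intro Δ hΔ
    have hbnd : Integrable (fun s => (K s^2 + K (s+Δ)^2)/2) (volume.restrict (Ioi 0)) :=
      (hKL2.add (hshift2 Δ hΔ)).div_const 2
    refine Integrable.mono' hbnd (hKaesm.mul (hshiftaesm Δ hΔ)) (ae_of_all _ fun s => ?_)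
    rw [Real.norm_eq_abs, abs_mul]
    nlinarith [sq_nonneg (|K s| - |K (s+Δ)|), sq_abs (K s), sq_abs (K (s+Δ)),
      abs_nonneg (K s), abs_nonneg (K (s+Δ))]
  -- choose T with large truncated integral
  obtain ⟨T, hTτ, hTL⟩ := aux_exists_big hFmeas hFnn hFint hlayer (2*M+1) τ
  set L : ℝ := ∫ t in Ioc τ T, F t with hL_def
  have hL1 : 2*M+1 ≤ L := hTL
  -- key pointwise lower bound for the autocovariance integrand
  have hG : ∀ Δ : ℝ, τ ≤ Δ → L * F (T + Δ) - M * F Δ ≤ ∫ s in Ioi (0:ℝ), K s * K (s + Δ) := by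
    intro Δ hΔ
    have hΔ0 : 0 ≤ Δ := le_trans hτ.le hΔ
    have hint : IntegrableOn (fun s => K s * K (s+Δ)) (Ioi 0) := hprod Δ hΔ0
    have hsplit : Ioc (0:ℝ) τ ∪ Ioi τ = Ioi 0 := Ioc_union_Ioi_eq_Ioi hτ.le
    have hdisj : Disjoint (Ioc (0:ℝ) τ) (Ioi τ) := by
      rw [disjoint_left]; intro x hx1 hx2; exact absurd hx1.2 (not_le.2 hx2)
    have hintIoc : IntegrableOn (fun s => K s * K (s+Δ)) (Ioc 0 τ) :=
      hint.mono_set Ioc_subset_Ioi_self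
    have hintIoi : IntegrableOn (fun s => K s * K (s+Δ)) (Ioi τ) :=
      hint.mono_set (Ioi_subset_Ioi hτ.le)
    have heq : ∫ s in Ioi (0:ℝ), K s * K (s + Δ) =
        (∫ s in Ioc (0:ℝ) τ, K s * K (s + Δ)) + ∫ s in Ioi τ, K s * K (s + Δ) := by
      rw [← hsplit, setIntegral_union hdisj measurableSet_Ioi hintIoc hintIoi]
    have hT1 : |∫ s in Ioc (0:ℝ) τ, K s * K (s + Δ)| ≤ M * F Δ := by
      have habs : IntegrableOn (fun s => |K s| * |K (s + Δ)|) (Ioc 0 τ) := by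
        simpa [abs_mul, IntegrableOn] using hintIoc.abs
      have hstep : ∫ s in Ioc (0:ℝ) τ, |K s| * |K (s + Δ)| ≤ ∫ s in Ioc (0:ℝ) τ, |K s| * F Δ := by
        refine setIntegral_mono_on habs (hK1.abs.mul_const _) measurableSet_Ioc
          (fun s hs => ?_)
        rw [hKF (s+Δ) (by linarith [hs.1]), abs_of_nonneg (hFnn (s+Δ))]
        exact mul_le_mul_of_nonneg_left (hFanti (by linarith [hs.1])) (abs_nonneg _)
      calc |∫ s in Ioc (0:ℝ) τ, K s * K (s + Δ)|
          ≤ ∫ s in Ioc (0:ℝ) τ, |K s| * |K (s + Δ)| := by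
            simpa [Real.norm_eq_abs, abs_mul] using
              norm_integral_le_integral_norm (μ := volume.restrict (Ioc (0:ℝ) τ))
                (fun s => K s * K (s + Δ))
        _ ≤ ∫ s in Ioc (0:ℝ) τ, |K s| * F Δ := hstep
        _ = M * F Δ := by rw [hM_def]; exact integral_mul_const _ _
    have hT2 : L * F (T + Δ) ≤ ∫ s in Ioi τ, K s * K (s + Δ) := by
      have hnnIoi : 0 ≤ᵐ[volume.restrict (Ioi τ)] fun s => K s * K (s+Δ) := by
        refine (ae_restrict_iff' measurableSet_Ioi).2 (ae_of_all _ fun s hs => ?_)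
        have hs' : τ ≤ s := (mem_Ioi.1 hs).le
        show 0 ≤ K s * K (s + Δ)
        rw [hKF s hs', hKF (s+Δ) (by linarith)]
        exact mul_nonneg (hFnn s) (hFnn (s+Δ))
      have hstep1 : ∫ s in Ioc τ T, F s * F (T + Δ) ≤ ∫ s in Ioc τ T, K s * K (s + Δ) := by
        refine setIntegral_mono_on ((hFint τ T).mul_const _)
          (hintIoi.mono_set Ioc_subset_Ioi_self) measurableSet_Ioc (fun s hs => ?_)
        rw [hKF s hs.1.le, hKF (s+Δ) (by linarith [hs.1])]
        exact mul_le_mul_of_nonneg_left (hFanti (add_le_add_left hs.2 Δ)) (hFnn s)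
      have hstep2 : ∫ s in Ioc τ T, K s * K (s + Δ) ≤ ∫ s in Ioi τ, K s * K (s + Δ) :=
        setIntegral_mono_set hintIoi hnnIoi
          (HasSubset.Subset.eventuallyLE Ioc_subset_Ioi_self)
      have hstep0 : ∫ s in Ioc τ T, F s * F (T + Δ) = L * F (T + Δ) := by
        rw [hL_def]; exact integral_mul_const _ _
      linarith
    rw [heq]
    have hneg := neg_abs_le (∫ s in Ioc (0:ℝ) τ, K s * K (s + Δ))
    linarith
  -- constants
  set B : ℝ := ∫ t in Ioc τ (T + τ), F t with hB_def
  have hB0 : 0 ≤ B := setIntegral_nonneg measurableSet_Ioc (fun t _ => hFnn t)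
  have hT0 : 0 ≤ T := le_trans hτ.le hTτ
  have hFTbdd : ∀ t, |F (T + t)| ≤ (kap univ).toReal := fun t => hFbdd _
  have hFTint : ∀ a b : ℝ, IntegrableOn (fun t => F (T + t)) (Ioc a b) :=
    hbddint _ (hFmeas.comp (measurable_const_add T)) hFTbdd
  -- lower bound for the truncated integral of the minorant
  have hHlow : ∀ R : ℝ, T + τ ≤ R →
      (∫ t in Ioc τ R, F t) - L * B ≤ ∫ Δ in Ioc τ R, (L * F (T + Δ) - M * F Δ) := by
    intro R hR
    have hτR : τ ≤ R := le_trans (by linarith) hR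
    have hAR0 : 0 ≤ ∫ t in Ioc τ R, F t := setIntegral_nonneg measurableSet_Ioc (fun t _ => hFnn t)
    have h1 : ∫ Δ in Ioc τ R, F (T + Δ) = ∫ t in Ioc (T + τ) (T + R), F t := by
      rw [← intervalIntegral.integral_of_le hτR, ← intervalIntegral.integral_of_le (by linarith)]
      exact intervalIntegral.integral_comp_add_left F T
    have h2 : ∫ t in Ioc (T+τ) R, F t ≤ ∫ t in Ioc (T+τ) (T+R), F t :=
      setIntegral_mono_set (hFint _ _) (ae_of_all _ fun t => hFnn t)
        (HasSubset.Subset.eventuallyLE (Ioc_subset_Ioc_right (by linarith)))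
    have hdisj2 : Disjoint (Ioc τ (T+τ)) (Ioc (T+τ) R) := by
      rw [disjoint_left]; intro x hx1 hx2; exact absurd hx1.2 (not_le.2 hx2.1)
    have h3 : (∫ t in Ioc τ R, F t) = B + ∫ t in Ioc (T+τ) R, F t := by
      rw [hB_def, ← setIntegral_union hdisj2 measurableSet_Ioc (hFint _ _) (hFint _ _),
        Ioc_union_Ioc_eq_Ioc (by linarith) hR]
    have h4 : ∫ Δ in Ioc τ R, (L * F (T + Δ) - M * F Δ) =
        L * (∫ Δ in Ioc τ R, F (T + Δ)) - M * ∫ t in Ioc τ R, F t := by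
      rw [integral_sub (((hFTint τ R)).const_mul L) ((hFint τ R).const_mul M),
        integral_const_mul, integral_const_mul]
    rw [h4, h1]
    have h5 : L * (∫ t in Ioc (T+τ) (T+R), F t) ≥ L * ((∫ t in Ioc τ R, F t) - B) := by
      have := h3
      have h6 : (∫ t in Ioc τ R, F t) - B = ∫ t in Ioc (T+τ) R, F t := by linarith
      rw [h6]
      exact mul_le_mul_of_nonneg_left h2 (by linarith)
    nlinarith [mul_nonneg (by linarith : (0:ℝ) ≤ L - M - 1) hAR0]
  -- conclusion
  refine ENNReal.eq_top_of_forall_nnreal_le fun r => ?_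
  obtain ⟨R, hRge, hRA⟩ := aux_exists_big hFmeas hFnn hFint hlayer ((r:ℝ)/C + L*B) (T+τ)
  have hτR : τ ≤ R := le_trans (by linarith) hRge
  have hint_h : IntegrableOn (fun Δ => L * F (T+Δ) - M * F Δ) (Ioc τ R) :=
    ((hFTint τ R).const_mul L).sub ((hFint τ R).const_mul M)
  have hintCh : IntegrableOn (fun Δ => C * (L * F (T+Δ) - M * F Δ)) (Ioc τ R) :=
    hint_h.const_mul C
  have hmax : IntegrableOn (fun Δ => max (C * (L * F (T+Δ) - M * F Δ)) 0) (Ioc τ R) :=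
    hintCh.pos_part
  calc (r : ENNReal) = ENNReal.ofReal (r:ℝ) := (ENNReal.ofReal_coe_nnreal (p := r)).symm
    _ ≤ ENNReal.ofReal (C * ((∫ t in Ioc τ R, F t) - L*B)) := by
        refine ENNReal.ofReal_le_ofReal ?_
        have h1 : (r:ℝ)/C ≤ (∫ t in Ioc τ R, F t) - L*B := by linarith
        have h2 := mul_le_mul_of_nonneg_left h1 hC.le
        rwa [mul_div_cancel₀ (r:ℝ) hC.ne'] at h2
    _ ≤ ENNReal.ofReal (C * ∫ Δ in Ioc τ R, (L * F (T+Δ) - M * F Δ)) :=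
        ENNReal.ofReal_le_ofReal (mul_le_mul_of_nonneg_left (hHlow R hRge) hC.le)
    _ = ENNReal.ofReal (∫ Δ in Ioc τ R, C * (L * F (T+Δ) - M * F Δ)) := by
        rw [integral_const_mul]
    _ ≤ ENNReal.ofReal (∫ Δ in Ioc τ R, max (C * (L * F (T+Δ) - M * F Δ)) 0) :=
        ENNReal.ofReal_le_ofReal (integral_mono hintCh hmax (fun Δ => le_max_left _ _))
    _ = ∫⁻ Δ in Ioc τ R, ENNReal.ofReal (max (C * (L * F (T+Δ) - M * F Δ)) 0) :=
        ofReal_integral_eq_lintegral_ofReal hmax (ae_of_all _ fun Δ => le_max_right _ _)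
    _ = ∫⁻ Δ in Ioc τ R, ENNReal.ofReal (C * (L * F (T+Δ) - M * F Δ)) := by
        refine lintegral_congr fun Δ => ?_
        rcases le_total (C * (L * F (T+Δ) - M * F Δ)) 0 with h | h
        · rw [max_eq_right h, ENNReal.ofReal_of_nonpos h, ENNReal.ofReal_zero]
        · rw [max_eq_left h]
    _ ≤ ∫⁻ Δ in Ioc τ R, ENNReal.ofReal |C * ∫ s in Ioi (0:ℝ), K s * K (s+Δ)| := by
        refine setLIntegral_mono' measurableSet_Ioc (fun Δ hΔ => ?_)
        refine ENNReal.ofReal_le_ofReal ?_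
        exact (mul_le_mul_of_nonneg_left (hG Δ hΔ.1.le) hC.le).trans (le_abs_self _)
    _ ≤ ∫⁻ Δ in Ioi (0:ℝ), ENNReal.ofReal |C * ∫ s in Ioi (0:ℝ), K s * K (s+Δ)| :=
        lintegral_mono_set (Ioc_subset_Ioi_self.trans (Ioi_subset_Ioi hτ.le))
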